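/- Let T > 0, let t satisfy 0 ≤ t ≤ T, let λ > 0 and μ ≥ 0 be real numbers. Then exp(-2*t*μ) / (exp(-2*T*μ) + λ)^2 ≤ λ^(t/T - 2), where the power on the right is the real power function. -/

import Mathlib

open Real

/-- Pointwise spectral inequality underlying Lemma 3.1:
`exp(-2tμ) / (exp(-2Tμ) + λ)² ≤ λ^(t/T - 2)`. -/
theorem stmt_0 (T t lam mu : ℝ) (hT : 0 < T) (ht0 : 0 ≤ t) (htT : t ≤ T)
    (hlam : 0 < lam) (hmu : 0 ≤ mu) :
    Real.exp (-2 * t * mu) / (Real.exp (-2 * T * mu) + lam) ^ 2 ≤ lam ^ (t / T - 2) := by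
  set θ := t / T with hθ
  have hθ0 : 0 ≤ θ := div_nonneg ht0 hT.le
  have hθ1 : θ ≤ 1 := (div_le_one hT).2 htT
  set a := Real.exp (-2 * T * mu) with ha
  have ha0 : 0 < a := Real.exp_pos _
  have hexp : Real.exp (-2 * t * mu) = a ^ θ := by
    rw [ha, Real.rpow_def_of_pos (Real.exp_pos _), Real.log_exp]
    congr 1
    field_simp [hθ]
    rw [hθ]; field_simp
  have hle1 : a ^ θ ≤ (a + lam) ^ θ :=
    Real.rpow_le_rpow ha0.le (le_add_of_nonneg_right hlam.le) hθ0
  have hle2 : lam ^ (2 - θ) ≤ (a + lam) ^ (2 - θ) :=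
    Real.rpow_le_rpow hlam.le (le_add_of_nonneg_left ha0.le) (by linarith)
  have hpos : (0:ℝ) < a + lam := by linarith
  have hkey : a ^ θ * lam ^ (2 - θ) ≤ (a + lam) ^ 2 := by
    calc a ^ θ * lam ^ (2 - θ) ≤ (a + lam) ^ θ * (a + lam) ^ (2 - θ) :=
          mul_le_mul hle1 hle2 (Real.rpow_nonneg hlam.le _) (Real.rpow_nonneg hpos.le _)
      _ = (a + lam) ^ (2:ℝ) := by rw [← Real.rpow_add hpos]; ring_nf
      _ = (a + lam) ^ 2 := Real.rpow_two _
  rw [hexp, div_le_iff₀ (by positivity)]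
  have h1 : a ^ θ = a ^ θ * lam ^ (2 - θ) * lam ^ (θ - 2) := by
    rw [mul_assoc, ← Real.rpow_add hlam, show (2 - θ) + (θ - 2) = 0 by ring,
      Real.rpow_zero, mul_one]
  rw [h1, mul_comm (lam ^ (θ - 2)) _]
  exact mul_le_mul_of_nonneg_right hkey (Real.rpow_nonneg hlam.le _)
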